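/- Let γ₁ > γ₂ > … > γ_p be ordinals and n₁, …, n_p, m₁, …, m_p natural numbers. Then (ω^{γ₁}·n₁ + ⋯ + ω^{γ_p}·n_p) ⊕ (ω^{γ₁}·m₁ + ⋯ + ω^{γ_p}·m_p) = ω^{γ₁}·(n₁+m₁) + ⋯ + ω^{γ_p}·(n_p+m_p), where ⊕ denotes the natural (Hessenberg) sum of ordinals, + between the displayed terms is ordinary ordinal addition, and ω^γ·n is ordinal exponentiation and multiplication. -/

import Mathlib

/-- The Cantor-normal-form style sum `ω^{γ 0} · n 0 + ⋯ + ω^{γ (p-1)} · n (p-1)`,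
with ordinary ordinal addition, summed in order of increasing index. -/
noncomputable def cnfSum (p : ℕ) (γ : Fin p → Ordinal) (n : Fin p → ℕ) : Ordinal :=
  (List.ofFn fun i => Ordinal.omega0 ^ (γ i) * (n i : Ordinal)).sum

namespace Ordinal

universe u

/-- Natural addition on ordinals `a ♯ b`, also known as the Hessenberg sum (the definition
formerly in Mathlib as `Ordinal.nadd`). -/
noncomputable def nadd : Ordinal.{u} → Ordinal.{u} → Ordinal.{u}
  | a, b =>
    max (blsub.{u, u} a fun a' _ => nadd a' b) (blsub.{u, u} b fun b' _ => nadd a b')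
termination_by o₁ o₂ => (o₁, o₂)

end Ordinal

namespace Ordinal

universe v

local infixl:65 " ♯ " => Ordinal.nadd

theorem nadd_def (a b : Ordinal.{v}) : a ♯ b =
    max (blsub.{v, v} a fun a' _ => a' ♯ b) (blsub.{v, v} b fun b' _ => a ♯ b') := by
  rw [nadd]

theorem lt_nadd_iff {a b c : Ordinal.{v}} :
    a < b ♯ c ↔ (∃ b' < b, a ≤ b' ♯ c) ∨ ∃ c' < c, a ≤ b ♯ c' := by
  rw [nadd_def, lt_max_iff, lt_blsub_iff, lt_blsub_iff]
  simp only [exists_prop]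

theorem nadd_le_iff {a b c : Ordinal.{v}} :
    b ♯ c ≤ a ↔ (∀ b' < b, b' ♯ c < a) ∧ ∀ c' < c, b ♯ c' < a := by
  rw [nadd_def, max_le_iff, blsub_le_iff, blsub_le_iff]

theorem nadd_lt_nadd_right {b c : Ordinal.{v}} (h : b < c) (a : Ordinal.{v}) :
    b ♯ a < c ♯ a :=
  lt_nadd_iff.2 (Or.inl ⟨b, h, le_rfl⟩)

theorem nadd_lt_nadd_left {b c : Ordinal.{v}} (h : b < c) (a : Ordinal.{v}) :
    a ♯ b < a ♯ c :=
  lt_nadd_iff.2 (Or.inr ⟨b, h, le_rfl⟩)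

theorem nadd_le_nadd_right {b c : Ordinal.{v}} (h : b ≤ c) (a : Ordinal.{v}) :
    b ♯ a ≤ c ♯ a := by
  rcases h.eq_or_lt with rfl | h
  · exact le_rfl
  · exact (nadd_lt_nadd_right h a).le

theorem nadd_le_nadd_left {b c : Ordinal.{v}} (h : b ≤ c) (a : Ordinal.{v}) :
    a ♯ b ≤ a ♯ c := by
  rcases h.eq_or_lt with rfl | h
  · exact le_rfl
  · exact (nadd_lt_nadd_left h a).le

theorem nadd_comm (a b : Ordinal.{v}) : a ♯ b = b ♯ a := by
  induction a using Ordinal.induction generalizing b with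
  | h a IHa =>
  induction b using Ordinal.induction with
  | h b IHb =>
  apply le_antisymm
  · rw [nadd_le_iff]
    constructor
    · intro a' ha'
      rw [IHa a' ha']
      exact nadd_lt_nadd_left ha' b
    · intro b' hb'
      rw [IHb b' hb']
      exact nadd_lt_nadd_right hb' a
  · rw [nadd_le_iff]
    constructor
    · intro b' hb'
      rw [← IHb b' hb']
      exact nadd_lt_nadd_left hb' a
    · intro a' ha'
      rw [← IHa a' ha']
      exact nadd_lt_nadd_right ha' b

theorem nadd_zero (a : Ordinal.{v}) : a ♯ 0 = a := by
  induction a using Ordinal.induction with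
  | h a IH =>
  apply le_antisymm
  · rw [nadd_le_iff]
    constructor
    · intro a' ha'
      rw [IH a' ha']
      exact ha'
    · intro c hc
      exact absurd hc not_lt_zero
  · apply le_of_forall_lt
    intro z hz
    rw [← IH z hz]
    exact nadd_lt_nadd_right hz 0

theorem zero_nadd (a : Ordinal.{v}) : 0 ♯ a = a := by
  rw [nadd_comm, nadd_zero]

theorem le_nadd_self (a b : Ordinal.{v}) : a ≤ a ♯ b := by
  calc a = a ♯ 0 := (nadd_zero a).symm
    _ ≤ a ♯ b := nadd_le_nadd_left zero_le a

theorem add_le_nadd (a b : Ordinal.{v}) : a + b ≤ a ♯ b := by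
  induction b using Ordinal.induction with
  | h b IH =>
  apply le_of_forall_lt
  intro z hz
  rcases lt_or_ge z a with hza | hza
  · exact hza.trans_le (le_nadd_self a b)
  · have hzeq : z = a + (z - a) := (Ordinal.add_sub_cancel_of_le hza).symm
    have hc : z - a < b := by
      rw [hzeq] at hz
      exact lt_of_add_lt_add_left hz
    rw [hzeq]
    exact (IH _ hc).trans_lt (nadd_lt_nadd_left hc a)

end Ordinal

open Ordinal Order

local infixl:65 " ♯ " => Ordinal.nadd

private lemma partB (γ : Ordinal)
    (hA : ∀ a b, a < omega0 ^ γ → b < omega0 ^ γ → a ♯ b < omega0 ^ γ) :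
    ∀ (n m : ℕ) (a b : Ordinal), a < omega0 ^ γ → b < omega0 ^ γ →
      (omega0 ^ γ * n + a) ♯ (omega0 ^ γ * m + b)
        = omega0 ^ γ * (↑(n + m) : Ordinal) + (a ♯ b) := by
  set w := omega0 ^ γ with hw
  suffices H : ∀ k : ℕ, ∀ c : Ordinal, ∀ (n m : ℕ) (a b : Ordinal), n + m = k → a ♯ b = c →
      a < w → b < w → (w * n + a) ♯ (w * m + b) = w * (↑(n + m) : Ordinal) + (a ♯ b) by
    intro n m a b ha hb
    exact H (n + m) (a ♯ b) n m a b rfl rfl ha hb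
  intro k
  induction k using Nat.strong_induction_on with
  | _ k IHk =>
  intro c
  induction c using Ordinal.induction with
  | h c IHc =>
  intro n m a b hk hc ha hb
  -- key sub-argument (used on both sides by symmetry)
  have P : ∀ (n m : ℕ) (a b x : Ordinal), n + m = k → a ♯ b = c → a < w → b < w →
      x < w * n + a → x ♯ (w * m + b) < w * (↑(n + m) : Ordinal) + (a ♯ b) := by
    intro n m a b x hk hc ha hb hx
    rcases le_or_gt (w * n) x with hge | hlt
    · -- x = w*n + a' with a' < a
      set a' := x - w * n with ha'
      have hxeq : x = w * n + a' := (Ordinal.add_sub_cancel_of_le hge).symm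
      have ha'a : a' < a := by
        have := hxeq ▸ hx
        exact lt_of_add_lt_add_left this
      have hcc : a' ♯ b < c := hc ▸ nadd_lt_nadd_right ha'a b
      have := IHc (a' ♯ b) hcc n m a' b hk rfl (ha'a.trans ha) hb
      rw [hxeq, this]
      exact add_lt_add_right (nadd_lt_nadd_right ha'a b) _
    · -- x < w*n, so n = n'+1 and x ≤ w*n' + a'' with a'' < w
      have hn : n ≠ 0 := by
        rintro rfl
        simp only [Nat.cast_zero, mul_zero] at hlt
        exact absurd hlt not_lt_zero
      obtain ⟨n', rfl⟩ := Nat.exists_eq_succ_of_ne_zero hn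
      have hxlt : x < w * n' + w := by
        have : ((n' + 1 : ℕ) : Ordinal) = (n' : Ordinal) + 1 := by push_cast; ring
        rwa [this, mul_add, mul_one] at hlt
      set a'' := x - w * n' with ha''
      have hxle : x ≤ w * n' + a'' := Ordinal.le_add_sub x (w * n')
      have ha''w : a'' < w := Ordinal.sub_lt_of_lt_add hxlt (opow_pos γ omega0_pos)
      have hk' : n' + m < k := by omega
      have heq := IHk (n' + m) hk' (a'' ♯ b) n' m a'' b rfl rfl ha''w hb
      calc x ♯ (w * m + b) ≤ (w * n' + a'') ♯ (w * m + b) := nadd_le_nadd_right hxle _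
        _ = w * (↑(n' + m) : Ordinal) + (a'' ♯ b) := heq
        _ < w * (↑(n' + m) : Ordinal) + w := add_lt_add_right (hA _ _ ha''w hb) _
        _ = w * (↑(n' + 1 + m) : Ordinal) := by
              rw [show n' + 1 + m = (n' + m) + 1 from by omega]
              push_cast
              rw [mul_add, mul_add, mul_one, mul_add]
        _ ≤ w * (↑(n' + 1 + m) : Ordinal) + (a ♯ b) := le_self_add
  apply le_antisymm
  · rw [nadd_le_iff]
    constructor
    · intro x hx
      exact P n m a b x hk hc ha hb hx
    · intro y hy
      have := P m n b a y (by omega) (by rw [nadd_comm]; exact hc) hb ha hy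
      calc (w * n + a) ♯ y = y ♯ (w * n + a) := nadd_comm _ _
        _ < w * (↑(m + n) : Ordinal) + (b ♯ a) := this
        _ = w * (↑(n + m) : Ordinal) + (a ♯ b) := by rw [nadd_comm, Nat.add_comm m n]
  · apply le_of_forall_lt
    intro z hz
    rcases le_or_gt (w * (↑(n + m) : Ordinal)) z with hge | hlt
    · -- z = w*(n+m) + u with u < a ♯ b
      set u := z - w * (↑(n + m) : Ordinal) with hu
      have hzeq : z = w * (↑(n + m) : Ordinal) + u := (Ordinal.add_sub_cancel_of_le hge).symm
      have huab : u < a ♯ b := by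
        have := hzeq ▸ hz
        exact lt_of_add_lt_add_left this
      rcases lt_nadd_iff.1 huab with ⟨a', ha'a, hua'⟩ | ⟨b', hb'b, hub'⟩
      · have heq := IHc (a' ♯ b) (hc ▸ nadd_lt_nadd_right ha'a b) n m a' b hk rfl
          (ha'a.trans ha) hb
        calc z = w * (↑(n + m) : Ordinal) + u := hzeq
          _ ≤ w * (↑(n + m) : Ordinal) + (a' ♯ b) := add_le_add_right hua' _
          _ = (w * n + a') ♯ (w * m + b) := heq.symm
          _ < (w * n + a) ♯ (w * m + b) := nadd_lt_nadd_right (add_lt_add_right ha'a _) _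
      · have heq := IHc (a ♯ b') (hc ▸ nadd_lt_nadd_left hb'b a) n m a b' hk rfl
          ha (hb'b.trans hb)
        calc z = w * (↑(n + m) : Ordinal) + u := hzeq
          _ ≤ w * (↑(n + m) : Ordinal) + (a ♯ b') := add_le_add_right hub' _
          _ = (w * n + a) ♯ (w * m + b') := heq.symm
          _ < (w * n + a) ♯ (w * m + b) := nadd_lt_nadd_left (add_lt_add_right hb'b _) _
    · calc z < w * (↑(n + m) : Ordinal) := hlt
        _ = w * n + w * m := by push_cast; rw [mul_add]
        _ ≤ w * n + (a + (w * m + b)) :=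
          add_le_add_right ((le_self_add).trans (le_add_self)) _
        _ = (w * n + a) + (w * m + b) := by rw [add_assoc]
        _ ≤ (w * n + a) ♯ (w * m + b) := add_le_nadd _ _

private lemma partA : ∀ γ : Ordinal, ∀ a b, a < omega0 ^ γ → b < omega0 ^ γ →
    a ♯ b < omega0 ^ γ := by
  intro γ
  induction γ using Ordinal.induction with
  | h γ IH =>
  intro a b ha hb
  rcases eq_or_ne a 0 with rfl | ha0
  · rwa [zero_nadd]
  rcases eq_or_ne b 0 with rfl | hb0
  · rwa [nadd_zero]
  set δ := max (Ordinal.log omega0 a) (Ordinal.log omega0 b) with hδ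
  have hδγ : δ < γ := by
    rw [hδ, max_lt_iff]
    exact ⟨(Ordinal.lt_opow_iff_log_lt one_lt_omega0 ha0).1 ha,
      (Ordinal.lt_opow_iff_log_lt one_lt_omega0 hb0).1 hb⟩
  have hwδ : (omega0 : Ordinal) ^ δ ≠ 0 := (opow_pos δ omega0_pos).ne'
  -- a < ω^δ * ω
  have haδ : a < omega0 ^ δ * omega0 := by
    calc a < omega0 ^ (succ (Ordinal.log omega0 a)) := Ordinal.lt_opow_succ_log_self one_lt_omega0 a
      _ ≤ omega0 ^ (succ δ) := Ordinal.opow_le_opow_right omega0_pos (succ_le_succ (le_max_left _ _))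
      _ = omega0 ^ δ * omega0 := opow_succ _ _
  have hbδ : b < omega0 ^ δ * omega0 := by
    calc b < omega0 ^ (succ (Ordinal.log omega0 b)) := Ordinal.lt_opow_succ_log_self one_lt_omega0 b
      _ ≤ omega0 ^ (succ δ) := Ordinal.opow_le_opow_right omega0_pos (succ_le_succ (le_max_right _ _))
      _ = omega0 ^ δ * omega0 := opow_succ _ _
  obtain ⟨na, hna⟩ := Ordinal.lt_omega0.1 ((Ordinal.div_lt hwδ).2 haδ)
  obtain ⟨nb, hnb⟩ := Ordinal.lt_omega0.1 ((Ordinal.div_lt hwδ).2 hbδ)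
  have hra : a % omega0 ^ δ < omega0 ^ δ := Ordinal.mod_lt a hwδ
  have hrb : b % omega0 ^ δ < omega0 ^ δ := Ordinal.mod_lt b hwδ
  have hAδ : ∀ x y, x < omega0 ^ δ → y < omega0 ^ δ → x ♯ y < omega0 ^ δ := IH δ hδγ
  have haeq : a = omega0 ^ δ * (na : Ordinal) + a % omega0 ^ δ := by
    rw [← hna]; exact (Ordinal.div_add_mod a _).symm
  have hbeq : b = omega0 ^ δ * (nb : Ordinal) + b % omega0 ^ δ := by
    rw [← hnb]; exact (Ordinal.div_add_mod b _).symm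
  calc a ♯ b
      = (omega0 ^ δ * (na : Ordinal) + a % omega0 ^ δ)
          ♯ (omega0 ^ δ * (nb : Ordinal) + b % omega0 ^ δ) := by rw [← haeq, ← hbeq]
    _ = omega0 ^ δ * (↑(na + nb) : Ordinal) + (a % omega0 ^ δ ♯ b % omega0 ^ δ) :=
        partB δ hAδ na nb _ _ hra hrb
    _ < omega0 ^ δ * (↑(na + nb) : Ordinal) + omega0 ^ δ := add_lt_add_right (hAδ _ _ hra hrb) _
    _ = omega0 ^ δ * (↑(na + nb + 1) : Ordinal) := by
        rw [Nat.cast_add (na + nb) 1, Nat.cast_one, mul_add, mul_one]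
    _ < omega0 ^ δ * omega0 :=
        mul_lt_mul_of_pos_left (nat_lt_omega0 _) (opow_pos δ omega0_pos)
    _ = omega0 ^ (succ δ) := (opow_succ _ _).symm
    _ ≤ omega0 ^ γ := Ordinal.opow_le_opow_right omega0_pos (succ_le_of_lt hδγ)

private lemma cnfSum_lt (p : ℕ) (γ : Fin p → Ordinal) (n : Fin p → ℕ) (e : Ordinal)
    (h : ∀ i, γ i < e) : cnfSum p γ n < Ordinal.omega0 ^ e := by
  induction p with
  | zero => simpa [cnfSum] using opow_pos e omega0_pos
  | succ p IH =>
    rw [cnfSum, List.ofFn_succ, List.sum_cons]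
    apply Ordinal.principal_add_omega0_opow e
    · rcases Nat.eq_zero_or_pos (n 0) with h0 | h0
      · simp [h0]; exact opow_pos e omega0_pos
      · calc Ordinal.omega0 ^ (γ 0) * (n 0 : Ordinal) < Ordinal.omega0 ^ (γ 0) * Ordinal.omega0 :=
              mul_lt_mul_of_pos_left (nat_lt_omega0 _) (opow_pos _ omega0_pos)
          _ = Ordinal.omega0 ^ (succ (γ 0)) := (opow_succ _ _).symm
          _ ≤ Ordinal.omega0 ^ e := Ordinal.opow_le_opow_right omega0_pos (succ_le_of_lt (h 0))
    · exact IH (fun i => γ i.succ) (fun i => n i.succ) (fun i => h i.succ)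

/-- if `γ₁ > γ₂ > … > γ_p` are ordinals and `n i`, `m i` natural numbers, then
`(ω^{γ₁}·n₁ + ⋯ + ω^{γ_p}·n_p) ⊕ (ω^{γ₁}·m₁ + ⋯ + ω^{γ_p}·m_p)
  = ω^{γ₁}·(n₁+m₁) + ⋯ + ω^{γ_p}·(n_p+m_p)`,
where `⊕` is the natural (Hessenberg) sum. -/
theorem stmt_18 (p : ℕ) (γ : Fin p → Ordinal) (hγ : ∀ i j : Fin p, i < j → γ j < γ i)
    (n m : Fin p → ℕ) :
    Ordinal.nadd (cnfSum p γ n) (cnfSum p γ m) = cnfSum p γ (fun i => n i + m i) := by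
  induction p with
  | zero => simp [cnfSum, Ordinal.nadd_zero]
  | succ p IH =>
    have hs : ∀ i j : Fin p, i < j → (fun i => γ i.succ) j < (fun i => γ i.succ) i :=
      fun i j h => hγ i.succ j.succ (Fin.succ_lt_succ_iff.2 h)
    have hrn : cnfSum p (fun i => γ i.succ) (fun i => n i.succ) < omega0 ^ (γ 0) :=
      cnfSum_lt _ _ _ _ (fun i => hγ 0 i.succ (Fin.succ_pos i))
    have hrm : cnfSum p (fun i => γ i.succ) (fun i => m i.succ) < omega0 ^ (γ 0) :=
      cnfSum_lt _ _ _ _ (fun i => hγ 0 i.succ (Fin.succ_pos i))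
    have hrec := IH (fun i => γ i.succ) hs (fun i => n i.succ) (fun i => m i.succ)
    have hunfold : ∀ q : Fin (p + 1) → ℕ, cnfSum (p + 1) γ q
        = omega0 ^ (γ 0) * (q 0 : Ordinal) + cnfSum p (fun i => γ i.succ) (fun i => q i.succ) := by
      intro q
      rw [cnfSum, List.ofFn_succ, List.sum_cons]
      rfl
    rw [hunfold n, hunfold m, hunfold (fun i => n i + m i)]
    show (omega0 ^ (γ 0) * (n 0 : Ordinal) + _) ♯ (omega0 ^ (γ 0) * (m 0 : Ordinal) + _) = _
    rw [partB (γ 0) (partA (γ 0)) (n 0) (m 0) _ _ hrn hrm, hrec]
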